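/- arXiv:1904.02680 — 2 statements merged into one kernel-verified Lean document; each statement's English description precedes it below -/
import Mathlib

section
/- Let μ(ρ) = min_{ω∈Ω} D(ρ,ω) be the state resource monotone induced by a distance quantifier D. Then the resource generating power R_g(N) = max over free states ω_AE of μ((N⊗id_E)(ω_AE)) and the resource boosting power R_b(N) = max over all states ρ_AE of ( μ((N⊗id_E)(ρ_AE)) − μ(ρ_AE) ) are channel resource monotones: both are nonnegative on all channels, both vanish on every RNG channel, and both satisfy R(φ₂∘(N⊗id)∘φ₁) ≤ R(N) for all channels N and all free operations φ₁, φ₂ ∈ Φ. -/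
set_option linter.unusedVariables false

noncomputable section

open scoped BigOperators ComplexOrder

/-! ## Basic objects: states and channels -/

/-- Square complex matrices of size `d` (the observables/operators of a `d`-dimensional system). -/
abbrev Mat (d : ℕ) := Matrix (Fin d) (Fin d) ℂ

/-- A quantum state: a positive semidefinite matrix of trace one. -/
def IsState {d : ℕ} (ρ : Mat d) : Prop := ρ.PosSemidef ∧ ρ.trace = 1

/-- Linear maps between matrix algebras. -/
abbrev MMap (a b : ℕ) := Mat a →ₗ[ℂ] Mat b

/-- The identity channel on an `e`-dimensional system. -/
def idMap (e : ℕ) : MMap e e := LinearMap.id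

/-- The `(i,j)` slice of a bipartite matrix, as a linear map. -/
def matSlice {a c : ℕ} (i j : Fin a) :
    Matrix (Fin a × Fin c) (Fin a × Fin c) ℂ →ₗ[ℂ] Mat c where
  toFun X := Matrix.of fun k l => X (i, k) (j, l)
  map_add' _ _ := rfl
  map_smul' _ _ := rfl

/-- Tensor product of matrix maps, on product index types. -/
def tensorAux {a b c d : ℕ} (N : MMap a b) (M : MMap c d) :
    Matrix (Fin a × Fin c) (Fin a × Fin c) ℂ →ₗ[ℂ]
      Matrix (Fin b × Fin d) (Fin b × Fin d) ℂ where
  toFun X := Matrix.of fun q q' =>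
    ∑ p : Fin a × Fin a,
      N (Matrix.single p.1 p.2 1) q.1 q'.1 * M (matSlice p.1 p.2 X) q.2 q'.2
  map_add' X Y := by
    ext q q'
    simp [map_add, Matrix.add_apply, mul_add, Finset.sum_add_distrib]
  map_smul' r X := by
    ext q q'
    simp only [Matrix.of_apply, map_smul, Matrix.smul_apply, smul_eq_mul, RingHom.id_apply,
      Finset.mul_sum]
    exact Finset.sum_congr rfl fun p _ => by ring

/-- Tensor product `N ⊗ M` of matrix maps. -/
def tensorMap {a b c d : ℕ} (N : MMap a b) (M : MMap c d) : MMap (a * c) (b * d) :=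
  (Matrix.reindexLinearEquiv ℂ ℂ finProdFinEquiv finProdFinEquiv).toLinearMap ∘ₗ
    tensorAux N M ∘ₗ
      (Matrix.reindexLinearEquiv ℂ ℂ finProdFinEquiv.symm finProdFinEquiv.symm).toLinearMap

/-- Positive maps: maps preserving positive semidefiniteness. -/
def IsPosMap {a b : ℕ} (N : MMap a b) : Prop :=
  ∀ X : Mat a, X.PosSemidef → (N X).PosSemidef

/-- Completely positive maps: `N ⊗ id_E` is positive for every ancilla dimension. -/
def IsCP {a b : ℕ} (N : MMap a b) : Prop :=
  IsPosMap N ∧ ∀ e : ℕ, IsPosMap (tensorMap N (idMap e))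

/-- Trace-preserving maps. -/
def IsTP {a b : ℕ} (N : MMap a b) : Prop := ∀ X : Mat a, (N X).trace = X.trace

/-- A quantum channel: a completely positive trace-preserving linear map. -/
def IsChannel {a b : ℕ} (N : MMap a b) : Prop := IsCP N ∧ IsTP N

/-- Tensor product of two matrices (Kronecker product, reindexed to `Fin (a*c)`). -/
def tensorState {a c : ℕ} (ρ : Mat a) (σ : Mat c) : Mat (a * c) :=
  Matrix.reindex finProdFinEquiv finProdFinEquiv (Matrix.kroneckerMap (· * ·) ρ σ)

/-- The `n`-fold tensor power of a matrix map. -/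
def chanPow {a b : ℕ} (N : MMap a b) : (n : ℕ) → MMap (a ^ n) (b ^ n)
  | 0 => idMap 1
  | n + 1 => tensorMap (chanPow N n) N

/-- The `n`-fold tensor power of a matrix. -/
def statePow {d : ℕ} (ρ : Mat d) : (n : ℕ) → Mat (d ^ n)
  | 0 => 1
  | n + 1 => tensorState (statePow ρ n) ρ

/-- The trace norm of a matrix, as the sum of its singular values. -/
def traceNorm {d : ℕ} (A : Mat d) : ℝ :=
  ∑ i, Real.sqrt ((Matrix.isHermitian_conjTranspose_mul_self A).eigenvalues i)

/-- The diamond-norm distance between two matrix maps. -/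
def diamondDist {a b : ℕ} (N M : MMap a b) : ℝ :=
  sSup {x : ℝ | ∃ (e : ℕ) (ρ : Mat (a * e)), IsState ρ ∧
    x = traceNorm (tensorMap (N - M) (idMap e) ρ)}

/-! ## State resource theories -/

/-- A distance quantifier: a real number assigned to each pair of equal-dimension matrices. -/
def DQ : Type := ∀ d : ℕ, Mat d → Mat d → ℝ

/-- The defining properties of a distance quantifier: nonnegativity and data processing. -/
structure IsDistanceQuantifier (D : DQ) : Prop where
  nonneg : ∀ (d : ℕ) (ρ σ : Mat d), IsState ρ → IsState σ → 0 ≤ D d ρ σ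
  eq_zero : ∀ (d : ℕ) (ρ σ : Mat d), IsState ρ → IsState σ → ρ = σ → D d ρ σ = 0
  dpi : ∀ (a b : ℕ) (N : MMap a b), IsChannel N → ∀ ρ σ : Mat a,
    IsState ρ → IsState σ → D b (N ρ) (N σ) ≤ D a ρ σ

/-- An assignment of a set of free states to each system. -/
def FreeStates : Type := ∀ d : ℕ, Set (Mat d)

structure IsFreeStates (Ω : FreeStates) : Prop where
  nonempty : ∀ d : ℕ, 0 < d → (Ω d).Nonempty
  isState : ∀ (d : ℕ) (ω : Mat d), ω ∈ Ω d → IsState ω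

/-- Resource-nongenerating channels: `(N ⊗ id_E)(ω)` is free for every free `ω` and ancilla `E`. -/
def RNG (Ω : FreeStates) {a b : ℕ} (N : MMap a b) : Prop :=
  ∀ (e : ℕ) (ω : Mat (a * e)), ω ∈ Ω (a * e) →
    tensorMap N (idMap e) ω ∈ Ω (b * e)

/-- An assignment of a set of free operations between each pair of systems. -/
def FreeOps : Type := ∀ a b : ℕ, Set (MMap a b)

structure IsFreeOps (Ω : FreeStates) (Φ : FreeOps) : Prop where
  channel : ∀ (a b : ℕ) (φ : MMap a b), φ ∈ Φ a b → IsChannel φ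
  maps_free : ∀ (a b : ℕ) (φ : MMap a b), φ ∈ Φ a b → ∀ ω ∈ Ω a, φ ω ∈ Ω b
  tensor_id : ∀ (a b : ℕ) (φ : MMap a b), φ ∈ Φ a b →
    ∀ e : ℕ, tensorMap φ (idMap e) ∈ Φ (a * e) (b * e)

/-- Channel distance induced by a state distance quantifier (maximized over all input
states together with an arbitrary ancilla). -/
def chanDist (D : DQ) {a b : ℕ} (N M : MMap a b) : ℝ :=
  sSup {x : ℝ | ∃ (e : ℕ) (ρ : Mat (a * e)), IsState ρ ∧
    x = D (b * e) (tensorMap N (idMap e) ρ) (tensorMap M (idMap e) ρ)}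

/-- Free-state-restricted channel distance. -/
def chanDistFree (D : DQ) (Ω : FreeStates) {a b : ℕ} (N M : MMap a b) : ℝ :=
  sSup {x : ℝ | ∃ (e : ℕ) (ω : Mat (a * e)), ω ∈ Ω (a * e) ∧
    x = D (b * e) (tensorMap N (idMap e) ω) (tensorMap M (idMap e) ω)}

/-- Distance-based channel resource monotone `R(N) = min_{M ∈ RNG} D(N, M)`. -/
def Rmon (D : DQ) (Ω : FreeStates) {a b : ℕ} (N : MMap a b) : ℝ :=
  sInf {x : ℝ | ∃ M : MMap a b, IsChannel M ∧ RNG Ω M ∧ x = chanDist D N M}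

/-- Free-state-restricted channel resource monotone `R_Ω(N) = min_{M ∈ RNG} D_Ω(N, M)`. -/
def ROmega (D : DQ) (Ω : FreeStates) {a b : ℕ} (N : MMap a b) : ℝ :=
  sInf {x : ℝ | ∃ M : MMap a b, IsChannel M ∧ RNG Ω M ∧ x = chanDistFree D Ω N M}

/-- The state resource monotone induced by a distance quantifier: `μ(ρ) = min_{ω ∈ Ω} D(ρ, ω)`. -/
def muDist (D : DQ) (Ω : FreeStates) (d : ℕ) (ρ : Mat d) : ℝ :=
  sInf {x : ℝ | ∃ ω ∈ Ω d, x = D d ρ ω}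

/-- The resource generating power of a channel, for a state resource measure `μ`. -/
def RgOf (μ : ∀ d : ℕ, Mat d → ℝ) (Ω : FreeStates) {a b : ℕ} (N : MMap a b) : ℝ :=
  sSup {x : ℝ | ∃ (e : ℕ) (ω : Mat (a * e)), ω ∈ Ω (a * e) ∧
    x = μ (b * e) (tensorMap N (idMap e) ω)}

/-- The resource boosting power of a channel, for a state resource measure `μ`. -/
def RbOf (μ : ∀ d : ℕ, Mat d → ℝ) {a b : ℕ} (N : MMap a b) : ℝ :=
  sSup {x : ℝ | ∃ (e : ℕ) (ρ : Mat (a * e)), IsState ρ ∧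
    x = μ (b * e) (tensorMap N (idMap e) ρ) - μ (a * e) ρ}

/-! ## Super-operations and asymptotic rates -/

/-- `N'` is obtained from `N` by a free super-operation `N' = φ₁ ∘ (N ⊗ id) ∘ φ₂`. -/
def IsFreeTransform (Φ : FreeOps) {a b c c' : ℕ} (N : MMap a b) (N' : MMap c c') : Prop :=
  ∃ (e : ℕ) (φ₁ : MMap (b * e) c') (φ₂ : MMap c (a * e)),
    φ₁ ∈ Φ (b * e) c' ∧ φ₂ ∈ Φ c (a * e) ∧
    N' = φ₁ ∘ₗ tensorMap N (idMap e) ∘ₗ φ₂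

/-- `IterComp Φ N M n` : `M` is a sequential composition `Λ₁(N) ∘ ⋯ ∘ Λₙ(N)` of `n`
outputs of free super-operations applied to `N`. -/
inductive IterComp (Φ : FreeOps) {a b : ℕ} (N : MMap a b) :
    ∀ {c c' : ℕ}, MMap c c' → ℕ → Prop
  | single {c c' : ℕ} (N' : MMap c c') : IsFreeTransform Φ N N' → IterComp Φ N N' 1
  | comp {c c' c'' : ℕ} (M : MMap c c') (N' : MMap c' c'') (n : ℕ) :
      IterComp Φ N M n → IsFreeTransform Φ N N' → IterComp Φ N (N' ∘ₗ M) (n + 1)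

/-- A rate `R` is achievable for parallel distillation of `N` into channels from `𝔊`. -/
def DistillAchievable (Φ : FreeOps) {g g' : ℕ} (𝔊 : Set (MMap g g')) {a b : ℕ}
    (N : MMap a b) (R : ℝ) : Prop :=
  ∀ ε : ℝ, 0 < ε → ∃ n₀ : ℕ, ∀ n : ℕ, n₀ ≤ n →
    ∃ G ∈ 𝔊, ∃ N' : MMap (g ^ Nat.floor ((n : ℝ) * R)) (g' ^ Nat.floor ((n : ℝ) * R)),
      IsFreeTransform Φ (chanPow N n) N' ∧
      diamondDist N' (chanPow G (Nat.floor ((n : ℝ) * R))) ≤ ε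

/-- The parallel channel distillation rate. -/
def Rdistill (Φ : FreeOps) {g g' : ℕ} (𝔊 : Set (MMap g g')) {a b : ℕ} (N : MMap a b) : ℝ :=
  sSup {R : ℝ | 0 ≤ R ∧ DistillAchievable Φ 𝔊 N R}

/-- A rate `R` is achievable for parallel dilution of channels from `𝔊` into `N`. -/
def DiluteAchievable (Φ : FreeOps) {g g' : ℕ} (𝔊 : Set (MMap g g')) {a b : ℕ}
    (N : MMap a b) (R : ℝ) : Prop :=
  ∀ ε : ℝ, 0 < ε → ∃ n₀ : ℕ, ∀ n : ℕ, n₀ ≤ n →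
    ∃ G ∈ 𝔊, ∃ N' : MMap (a ^ n) (b ^ n),
      IsFreeTransform Φ (chanPow G (Nat.ceil ((n : ℝ) * R))) N' ∧
      diamondDist N' (chanPow N n) ≤ ε

/-- The parallel channel dilution rate. -/
def Rdilute (Φ : FreeOps) {g g' : ℕ} (𝔊 : Set (MMap g g')) {a b : ℕ} (N : MMap a b) : ℝ :=
  sInf {R : ℝ | 0 ≤ R ∧ DiluteAchievable Φ 𝔊 N R}

/-- A rate `R` is achievable for iterative distillation of `N`. -/
def IterDistillAchievable (Φ : FreeOps) {g g' : ℕ} (𝔊 : Set (MMap g g')) {a b : ℕ}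
    (N : MMap a b) (R : ℝ) : Prop :=
  ∀ ε : ℝ, 0 < ε → ∃ n₀ : ℕ, ∀ n : ℕ, n₀ ≤ n →
    ∃ G ∈ 𝔊, ∃ N' : MMap (g ^ Nat.floor ((n : ℝ) * R)) (g' ^ Nat.floor ((n : ℝ) * R)),
      IterComp Φ N N' n ∧
      diamondDist N' (chanPow G (Nat.floor ((n : ℝ) * R))) ≤ ε

/-- The iterative channel distillation rate. -/
def RdistillIter (Φ : FreeOps) {g g' : ℕ} (𝔊 : Set (MMap g g')) {a b : ℕ} (N : MMap a b) : ℝ :=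
  sSup {R : ℝ | 0 ≤ R ∧ IterDistillAchievable Φ 𝔊 N R}

/-- A rate `R` is achievable for iterative dilution of channels from `𝔊` into `N`. -/
def IterDiluteAchievable (Φ : FreeOps) {g g' : ℕ} (𝔊 : Set (MMap g g')) {a b : ℕ}
    (N : MMap a b) (R : ℝ) : Prop :=
  ∀ ε : ℝ, 0 < ε → ∃ n₀ : ℕ, ∀ n : ℕ, n₀ ≤ n →
    ∃ G ∈ 𝔊, ∃ N' : MMap (a ^ n) (b ^ n),
      IterComp Φ G N' (Nat.ceil ((n : ℝ) * R)) ∧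
      diamondDist N' (chanPow N n) ≤ ε

/-- The iterative channel dilution rate. -/
def RdiluteIter (Φ : FreeOps) {g g' : ℕ} (𝔊 : Set (MMap g g')) {a b : ℕ} (N : MMap a b) : ℝ :=
  sInf {R : ℝ | 0 ≤ R ∧ IterDiluteAchievable Φ 𝔊 N R}

/-- The constant channel that outputs the state `ρm` on every input. -/
def constChan (a : ℕ) {g : ℕ} (ρm : Mat g) : MMap a g where
  toFun X := X.trace • ρm
  map_add' X Y := by simp [Matrix.trace_add, add_smul]
  map_smul' r X := by simp [Matrix.trace_smul, smul_smul]

/-- The asymptotic state distillation rate (towards the maximal resource state `ρm`). -/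
def muDistill (Φ : FreeOps) {g : ℕ} (ρm : Mat g) (d : ℕ) (σ : Mat d) : ℝ :=
  sSup {R : ℝ | 0 ≤ R ∧ ∀ ε : ℝ, 0 < ε → ∃ n₀ : ℕ, ∀ n : ℕ, n₀ ≤ n →
    ∃ φ ∈ Φ (d ^ n) (g ^ Nat.floor ((n : ℝ) * R)),
      traceNorm (φ (statePow σ n) - statePow ρm (Nat.floor ((n : ℝ) * R))) ≤ ε}

/-- The asymptotic state dilution rate (from the maximal resource state `ρm`). -/
def muDilute (Φ : FreeOps) {g : ℕ} (ρm : Mat g) (d : ℕ) (σ : Mat d) : ℝ :=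
  sInf {R : ℝ | 0 ≤ R ∧ ∀ ε : ℝ, 0 < ε → ∃ n₀ : ℕ, ∀ n : ℕ, n₀ ≤ n →
    ∃ φ ∈ Φ (g ^ Nat.ceil ((n : ℝ) * R)) (d ^ n),
      traceNorm (φ (statePow ρm (Nat.ceil ((n : ℝ) * R))) - statePow σ n) ≤ ε}

/-! ## Coherence -/

/-- Incoherent (diagonal) matrices with respect to the computational basis. -/
def IsIncoherent {d : ℕ} (ρ : Mat d) : Prop := ∀ i j : Fin d, i ≠ j → ρ i j = 0

/-- Matrix logarithm via the continuous functional calculus. -/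
def matLog {d : ℕ} (A : Mat d) : Mat d := cfc Real.log A

/-- The quantum relative entropy `S(ρ‖σ) = Tr ρ (log ρ − log σ)`. -/
def relEnt {d : ℕ} (ρ σ : Mat d) : ℝ := ((ρ * (matLog ρ - matLog σ)).trace).re

/-- The relative entropy of coherence `C_r(ρ) = min_{δ incoherent} S(ρ‖δ)`. -/
def Cr {d : ℕ} (ρ : Mat d) : ℝ :=
  sInf {x : ℝ | ∃ δ : Mat d, IsState δ ∧ IsIncoherent δ ∧ x = relEnt ρ δ}

/-- Maximally incoherent operations: channels mapping incoherent states to incoherent states. -/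
def MIO : FreeOps := fun a b =>
  {M | IsChannel M ∧ ∀ δ : Mat a, IsState δ → IsIncoherent δ → IsIncoherent (M δ)}

/-- The coherence generating power of a channel. -/
def Crg {a b : ℕ} (N : MMap a b) : ℝ :=
  sSup {x : ℝ | ∃ (e : ℕ) (δ : Mat (a * e)), IsState δ ∧ IsIncoherent δ ∧
    x = Cr (tensorMap N (idMap e) δ)}

/-- The coherence boosting power of a channel. -/
def Crb {a b : ℕ} (N : MMap a b) : ℝ :=
  sSup {x : ℝ | ∃ (e : ℕ) (ρ : Mat (a * e)), IsState ρ ∧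
    x = Cr (tensorMap N (idMap e) ρ) - Cr ρ}

/-- `C_{r,I}(N)`: the free-state-restricted relative-entropy distance from `N` to MIO. -/
def CrI {a b : ℕ} (N : MMap a b) : ℝ :=
  sInf {x : ℝ | ∃ M : MMap a b, M ∈ MIO a b ∧
    x = sSup {y : ℝ | ∃ (e : ℕ) (δ : Mat (a * e)), IsState δ ∧ IsIncoherent δ ∧
      y = relEnt (tensorMap N (idMap e) δ) (tensorMap M (idMap e) δ)}}

/-- The maximally coherent qubit state `Ψ₂`. -/
def Psi2 : Mat 2 := Matrix.of fun _ _ => (1 / 2 : ℂ)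

/-- The optimal unit resource channel for coherence: the constant channel with output `Ψ₂`. -/
def Gstar : MMap 2 2 := constChan 2 Psi2

/-- The smooth max entropy of channel coherence. -/
def CmaxEps (ε : ℝ) {a b : ℕ} (N : MMap a b) : ℝ :=
  sInf {x : ℝ | ∃ N' : MMap a b, IsChannel N' ∧ diamondDist N N' ≤ ε ∧
    x = Real.log (sInf {l : ℝ | ∃ M ∈ MIO a b, IsCP ((l : ℂ) • M - N')})}

/-! ### Auxiliary lemmas -/

open Matrix in
lemma tensor_id_apply {a b : ℕ} (N : MMap a b) (e : ℕ) (X : Mat (a * e)) (i j : Fin (b * e)) :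
    tensorMap N (idMap e) X i j =
      ∑ p : Fin a × Fin a,
        N (Matrix.single p.1 p.2 1) (finProdFinEquiv.symm i).1 (finProdFinEquiv.symm j).1 *
          X (finProdFinEquiv (p.1, (finProdFinEquiv.symm i).2))
            (finProdFinEquiv (p.2, (finProdFinEquiv.symm j).2)) := rfl

lemma fpe_assoc {m n p : ℕ} (x : Fin m) (y : Fin n) (z : Fin p) :
    finCongr (mul_assoc m n p) (finProdFinEquiv (finProdFinEquiv (x, y), z)) =
      finProdFinEquiv (x, finProdFinEquiv (y, z)) := by
  apply Fin.ext
  simp [finProdFinEquiv]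
  ring
open Matrix in
lemma psd_reindex {m n : Type*} [Fintype m] [Fintype n] (κ : m ≃ n) {A : Matrix m m ℂ} (hA : A.PosSemidef) :
    (Matrix.reindex κ κ A).PosSemidef := by
  simpa [Matrix.reindex_apply] using hA.submatrix κ.symm

open Matrix in
lemma psd_smul {d : ℕ} {c : ℂ} (hc : 0 ≤ c) {A : Mat d} (hA : A.PosSemidef) :
    (c • A).PosSemidef := by
  exact hA.smul hc

open Matrix in
lemma psd_diag {d : ℕ} {A : Mat d} (hA : A.PosSemidef) (i : Fin d) : 0 ≤ A i i := by
  exact hA.diag_nonneg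

open Matrix Kronecker in
lemma conjTranspose_kron {m n : ℕ} (A : Mat m) (B : Mat n) :
    (A ⊗ₖ B)ᴴ = Aᴴ ⊗ₖ Bᴴ := by
  ext i j
  simp [Matrix.conjTranspose_apply, star_mul']

open Matrix Kronecker in
lemma psd_kron {m n : ℕ} {A : Mat m} {B : Mat n} (hA : A.PosSemidef) (hB : B.PosSemidef) :
    (A ⊗ₖ B).PosSemidef := by
  exact hA.kronecker hB
lemma fpe_assoc' {m n p : ℕ} (x : Fin m) (y : Fin n) (z : Fin p) :
    (finCongr (mul_assoc m n p)).symm (finProdFinEquiv (x, finProdFinEquiv (y, z))) =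
      finProdFinEquiv (finProdFinEquiv (x, y), z) := by
  rw [← fpe_assoc]; exact Equiv.symm_apply_apply _ _

open Matrix in
lemma tensorMap_id_assoc {a b : ℕ} (N : MMap a b) (e f : ℕ) (X : Mat (a * e * f)) :
    tensorMap (tensorMap N (idMap e)) (idMap f) X =
      Matrix.reindex (finCongr (mul_assoc b e f)).symm (finCongr (mul_assoc b e f)).symm
        (tensorMap N (idMap (e * f))
          (Matrix.reindex (finCongr (mul_assoc a e f)) (finCongr (mul_assoc a e f)) X)) := by
  ext i j
  obtain ⟨⟨u, r⟩, rfl⟩ := finProdFinEquiv.surjective i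
  obtain ⟨⟨q1, q2⟩, rfl⟩ := finProdFinEquiv.surjective u
  obtain ⟨⟨v, s⟩, rfl⟩ := finProdFinEquiv.surjective j
  obtain ⟨⟨q1', q2'⟩, rfl⟩ := finProdFinEquiv.surjective v
  rw [tensor_id_apply, Matrix.reindex_apply, Matrix.submatrix_apply, Equiv.symm_symm,
    fpe_assoc, fpe_assoc, tensor_id_apply]
  simp only [Equiv.symm_apply_apply, Matrix.reindex_apply, Matrix.submatrix_apply, fpe_assoc']
  conv_lhs => rw [Finset.sum_congr rfl (fun (p : Fin (a*e) × Fin (a*e)) _ => by rw [tensor_id_apply])]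
  simp only [Equiv.symm_apply_apply, Finset.sum_mul]
  rw [Finset.sum_comm]
  refine Finset.sum_congr rfl fun w _ => ?_
  simp [Matrix.single, Fintype.sum_prod_type, ite_and, Finset.sum_ite_eq,
    Finset.sum_ite_eq', mul_comm, mul_assoc, mul_left_comm]
lemma map_entry_expand {a b : ℕ} (A : MMap a b) (M : Mat a) (u v : Fin b) :
    A M u v = ∑ w : Fin a × Fin a,
      M w.1 w.2 * A (Matrix.single w.1 w.2 1) u v := by
  rw [Fintype.sum_prod_type]
  conv_lhs => rw [Matrix.matrix_eq_sum_single M]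
  rw [map_sum, Matrix.sum_apply]
  refine Finset.sum_congr rfl fun i _ => ?_
  rw [map_sum, Matrix.sum_apply]
  refine Finset.sum_congr rfl fun j _ => ?_
  have h : Matrix.single i j (M i j) = M i j • Matrix.single i j (1 : ℂ) := by
    rw [Matrix.smul_single, smul_eq_mul, mul_one]
  rw [h, map_smul, Matrix.smul_apply, smul_eq_mul]

open Matrix in
lemma tensorMap_id_comp {a b c : ℕ} (A : MMap b c) (B : MMap a b) (f : ℕ) (X : Mat (a * f)) :
    tensorMap (A ∘ₗ B) (idMap f) X = tensorMap A (idMap f) (tensorMap B (idMap f) X) := by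
  ext i j
  obtain ⟨⟨u, r⟩, rfl⟩ := finProdFinEquiv.surjective i
  obtain ⟨⟨v, s⟩, rfl⟩ := finProdFinEquiv.surjective j
  rw [tensor_id_apply, tensor_id_apply]
  simp only [Equiv.symm_apply_apply, LinearMap.comp_apply]
  conv_rhs => rw [Finset.sum_congr rfl
    (fun (p : Fin b × Fin b) _ => by rw [tensor_id_apply])]
  simp only [Equiv.symm_apply_apply]
  conv_lhs => rw [Finset.sum_congr rfl
    (fun (w : Fin a × Fin a) _ => by rw [map_entry_expand A (B _)])]
  simp only [Finset.mul_sum, Finset.sum_mul]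
  rw [Finset.sum_comm]
  refine Finset.sum_congr rfl fun w _ => Finset.sum_congr rfl fun p _ => by ring
open Matrix in
lemma trace_fpe {m n : ℕ} (M : Mat (m * n)) :
    M.trace = ∑ y : Fin m × Fin n, M (finProdFinEquiv y) (finProdFinEquiv y) := by
  rw [Matrix.trace, ← Equiv.sum_comp finProdFinEquiv (fun i => M.diag i)]; rfl

open Matrix in
lemma isTP_tensor {a b : ℕ} {N : MMap a b} (hN : IsTP N) (e : ℕ) :
    IsTP (tensorMap N (idMap e)) := by
  intro X
  rw [trace_fpe, trace_fpe]
  conv_lhs => rw [Finset.sum_congr rfl (fun (y : Fin b × Fin e) _ => by rw [tensor_id_apply])]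
  simp only [Equiv.symm_apply_apply]
  rw [Finset.sum_comm]
  have key : ∀ p : Fin a × Fin a,
      (∑ y : Fin b × Fin e, N (Matrix.single p.1 p.2 1) y.1 y.1 *
        X (finProdFinEquiv (p.1, y.2)) (finProdFinEquiv (p.2, y.2)))
      = (if p.1 = p.2 then (1:ℂ) else 0) *
          ∑ k : Fin e, X (finProdFinEquiv (p.1, k)) (finProdFinEquiv (p.2, k)) := by
    intro p
    rw [Fintype.sum_prod_type]
    simp only [← Finset.mul_sum]
    rw [← Finset.sum_mul]
    congr 1
    have h1 : ∑ u : Fin b, N (Matrix.single p.1 p.2 1) u u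
        = (N (Matrix.single p.1 p.2 1)).trace := rfl
    rw [h1, hN]
    simp [Matrix.trace, Matrix.diag, Matrix.single, ite_and, Finset.sum_ite_eq, eq_comm]
  rw [Finset.sum_congr rfl (fun p _ => key p)]
  simp [Fintype.sum_prod_type, ite_mul, zero_mul, one_mul, Finset.sum_ite_eq,
    Finset.sum_ite_eq']
open Matrix in
lemma isChannel_tensor {a b : ℕ} {N : MMap a b} (hN : IsChannel N) (e : ℕ) :
    IsChannel (tensorMap N (idMap e)) := by
  refine ⟨⟨hN.1.2 e, fun f X hX => ?_⟩, isTP_tensor hN.2 e⟩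
  rw [tensorMap_id_assoc]
  exact psd_reindex _ (hN.1.2 (e * f) _ (psd_reindex _ hX))

lemma isState_map {a b : ℕ} {M : MMap a b} (hM : IsChannel M) {ρ : Mat a} (hρ : IsState ρ) :
    IsState (M ρ) := ⟨hM.1.1 ρ hρ.1, by rw [hM.2]; exact hρ.2⟩

lemma isState_dim_pos {d : ℕ} {ρ : Mat d} (hρ : IsState ρ) : 0 < d := by
  rcases Nat.eq_zero_or_pos d with h | h
  · subst h
    have := hρ.2
    simp [Matrix.trace] at this
  · exact h

def castM {d d' : ℕ} (h : d = d') (ρ : Mat d) : Mat d' :=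
  Matrix.reindex (finCongr h) (finCongr h) ρ

lemma castM_free (Ω : FreeStates) {d d' : ℕ} (h : d = d') (ρ : Mat d) :
    castM h ρ ∈ Ω d' ↔ ρ ∈ Ω d := by subst h; simp [castM]

lemma castM_isState {d d' : ℕ} (h : d = d') (ρ : Mat d) :
    IsState (castM h ρ) ↔ IsState ρ := by subst h; simp [castM]

lemma muDist_castM (D : DQ) (Ω : FreeStates) {d d' : ℕ} (h : d = d') (ρ : Mat d) :
    muDist D Ω d' (castM h ρ) = muDist D Ω d ρ := by subst h; simp [castM]

lemma reindex_symm_eq_castM {d d' : ℕ} (h : d = d') (M : Mat d') :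
    Matrix.reindex (finCongr h).symm (finCongr h).symm M = castM h.symm M := by
  rw [castM, finCongr_symm]

section mu
variable {D : DQ} {Ω : FreeStates}

lemma mu_nonneg (hD : IsDistanceQuantifier D) (hΩ : IsFreeStates Ω) {d : ℕ} {ρ : Mat d}
    (hρ : IsState ρ) : 0 ≤ muDist D Ω d ρ :=
  Real.sInf_nonneg fun x ⟨ω, hω, hx⟩ => hx ▸ hD.nonneg d ρ ω hρ (hΩ.isState d ω hω)

lemma mu_le (hD : IsDistanceQuantifier D) (hΩ : IsFreeStates Ω) {d : ℕ} {ρ : Mat d}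
    (hρ : IsState ρ) {ω : Mat d} (hω : ω ∈ Ω d) : muDist D Ω d ρ ≤ D d ρ ω :=
  csInf_le ⟨0, fun x ⟨ω', hω', hx⟩ => hx ▸ hD.nonneg d ρ ω' hρ (hΩ.isState d ω' hω')⟩
    ⟨ω, hω, rfl⟩

lemma mu_free_zero (hD : IsDistanceQuantifier D) (hΩ : IsFreeStates Ω) {d : ℕ} {ω : Mat d}
    (hω : ω ∈ Ω d) : muDist D Ω d ω = 0 := by
  have hst := hΩ.isState d ω hω
  refine le_antisymm ((mu_le hD hΩ hst hω).trans_eq (hD.eq_zero d ω ω hst hst rfl))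
    (mu_nonneg hD hΩ hst)

lemma mu_mono (hD : IsDistanceQuantifier D) (hΩ : IsFreeStates Ω) {d d' : ℕ} {Λ : MMap d d'}
    (hΛ : IsChannel Λ) (hfree : ∀ ω ∈ Ω d, Λ ω ∈ Ω d') {ρ : Mat d} (hρ : IsState ρ) :
    muDist D Ω d' (Λ ρ) ≤ muDist D Ω d ρ := by
  obtain ⟨ω₀, hω₀⟩ := hΩ.nonempty d (isState_dim_pos hρ)
  have hne : {x : ℝ | ∃ ω ∈ Ω d, x = D d ρ ω}.Nonempty := ⟨D d ρ ω₀, ω₀, hω₀, rfl⟩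
  apply le_csInf hne
  rintro x ⟨ω, hω, rfl⟩
  exact (mu_le hD hΩ (isState_map hΛ hρ) (hfree ω hω)).trans
    (hD.dpi _ _ Λ hΛ ρ ω hρ (hΩ.isState _ _ hω))

end mu
def rho0 : Mat 2 := Matrix.diagonal (fun i => if i = 0 then 1 else 0)
def rho1 : Mat 2 := Matrix.diagonal (fun i => if i = 1 then 1 else 0)

lemma isState_rho0 : IsState rho0 := by
  constructor
  · exact Matrix.PosSemidef.diagonal (fun i => by dsimp; split <;> simp)
  · simp [rho0, Matrix.trace_diagonal, Fin.sum_univ_two]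

lemma isState_rho1 : IsState rho1 := by
  constructor
  · exact Matrix.PosSemidef.diagonal (fun i => by dsimp; split <;> simp)
  · simp [rho1, Matrix.trace_diagonal, Fin.sum_univ_two]

def measChan {d : ℕ} (τ ω : Mat d) : MMap 2 d where
  toFun X := X 0 0 • τ + X 1 1 • ω
  map_add' X Y := by
    simp only [Matrix.add_apply, add_smul]
    abel
  map_smul' c X := by
    simp [Matrix.smul_apply, smul_smul, smul_add]

open Matrix Kronecker in
lemma measChan_tensor {d : ℕ} (τ ω : Mat d) (e : ℕ) (X : Mat (2 * e)) :
    tensorMap (measChan τ ω) (idMap e) X =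
      Matrix.reindex finProdFinEquiv finProdFinEquiv
        (τ ⊗ₖ (Matrix.of fun k l => X (finProdFinEquiv ((0 : Fin 2), k))
            (finProdFinEquiv ((0 : Fin 2), l)))
         + ω ⊗ₖ (Matrix.of fun k l => X (finProdFinEquiv ((1 : Fin 2), k))
            (finProdFinEquiv ((1 : Fin 2), l)))) := by
  ext i j
  obtain ⟨⟨u, r⟩, rfl⟩ := finProdFinEquiv.surjective i
  obtain ⟨⟨v, s⟩, rfl⟩ := finProdFinEquiv.surjective j
  rw [tensor_id_apply]
  simp only [Equiv.symm_apply_apply, Matrix.reindex_apply, Matrix.submatrix_apply,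
    Matrix.add_apply, Matrix.kroneckerMap_apply, Matrix.of_apply]
  simp [measChan, Matrix.single, Fintype.sum_prod_type, Fin.sum_univ_two,
    Matrix.add_apply, Matrix.smul_apply]

open Matrix in
lemma isChannel_measChan {d : ℕ} {τ ω : Mat d} (hτ : IsState τ) (hω : IsState ω) :
    IsChannel (measChan τ ω) := by
  have pos1 : IsPosMap (measChan τ ω) := fun X hX => by
    have h0 := psd_diag hX 0
    have h1 := psd_diag hX 1
    exact (psd_smul h0 hτ.1).add (psd_smul h1 hω.1)
  refine ⟨⟨pos1, fun e X hX => ?_⟩, fun X => ?_⟩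
  · rw [measChan_tensor]
    have hY : (X.submatrix (finProdFinEquiv (n := e)) finProdFinEquiv).PosSemidef :=
      hX.submatrix _
    have h0 : (Matrix.of fun k l => X (finProdFinEquiv ((0 : Fin 2), k))
        (finProdFinEquiv ((0 : Fin 2), l))).PosSemidef :=
      hY.submatrix (fun k => ((0 : Fin 2), k))
    have h1 : (Matrix.of fun k l => X (finProdFinEquiv ((1 : Fin 2), k))
        (finProdFinEquiv ((1 : Fin 2), l))).PosSemidef :=
      hY.submatrix (fun k => ((1 : Fin 2), k))
    exact psd_reindex _ ((psd_kron hτ.1 h0).add (psd_kron hω.1 h1))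
  · show (X 0 0 • τ + X 1 1 • ω).trace = X.trace
    rw [Matrix.trace_add, Matrix.trace_smul, Matrix.trace_smul, hτ.2, hω.2]
    simp [Matrix.trace, Matrix.diag, Fin.sum_univ_two]

lemma measChan_rho0 {d : ℕ} (τ ω : Mat d) : measChan τ ω rho0 = τ := by
  show rho0 0 0 • τ + rho0 1 1 • ω = τ
  simp [rho0]

lemma measChan_rho1 {d : ℕ} (τ ω : Mat d) : measChan τ ω rho1 = ω := by
  show rho1 0 0 • τ + rho1 1 1 • ω = ω
  simp [rho1]

lemma D_bound {D : DQ} (hD : IsDistanceQuantifier D) {d : ℕ} {τ ω : Mat d}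
    (hτ : IsState τ) (hω : IsState ω) : D d τ ω ≤ D 2 rho0 rho1 := by
  have h := hD.dpi 2 d (measChan τ ω) (isChannel_measChan hτ hω) rho0 rho1
    isState_rho0 isState_rho1
  rwa [measChan_rho0, measChan_rho1] at h

lemma mu_bound {D : DQ} {Ω : FreeStates} (hD : IsDistanceQuantifier D) (hΩ : IsFreeStates Ω)
    {d : ℕ} {ρ : Mat d} (hρ : IsState ρ) : muDist D Ω d ρ ≤ D 2 rho0 rho1 := by
  obtain ⟨ω₀, hω₀⟩ := hΩ.nonempty d (isState_dim_pos hρ)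
  exact (mu_le hD hΩ hρ hω₀).trans (D_bound hD hρ (hΩ.isState _ _ hω₀))

/-- For the state resource monotone `μ(ρ) = min_{ω ∈ Ω} D(ρ, ω)`, the
resource generating power `R_g` and the resource boosting power `R_b` are channel resource
monotones: nonnegative, vanishing on RNG channels, and monotone under free
super-operations `φ₂ ∘ (· ⊗ id) ∘ φ₁` with `φ₁, φ₂ ∈ Φ`. -/
theorem Rg_Rb_are_channel_resource_monotones
    (D : DQ) (hD : IsDistanceQuantifier D) (Ω : FreeStates) (hΩ : IsFreeStates Ω)
    (Φ : FreeOps) (hΦ : IsFreeOps Ω Φ) :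
    (∀ (a b : ℕ) (N : MMap a b), IsChannel N →
      0 ≤ RgOf (muDist D Ω) Ω N ∧ 0 ≤ RbOf (muDist D Ω) N) ∧
    (∀ (a b : ℕ) (M : MMap a b), IsChannel M → RNG Ω M →
      RgOf (muDist D Ω) Ω M = 0 ∧ RbOf (muDist D Ω) M = 0) ∧
    (∀ (a b e c c' : ℕ) (N : MMap a b) (φ₂ : MMap (b * e) c') (φ₁ : MMap c (a * e)),
      IsChannel N → φ₂ ∈ Φ (b * e) c' → φ₁ ∈ Φ c (a * e) →
      RgOf (muDist D Ω) Ω (φ₂ ∘ₗ tensorMap N (idMap e) ∘ₗ φ₁) ≤ RgOf (muDist D Ω) Ω N ∧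
      RbOf (muDist D Ω) (φ₂ ∘ₗ tensorMap N (idMap e) ∘ₗ φ₁) ≤ RbOf (muDist D Ω) N) := by
  have part1 : ∀ (a b : ℕ) (N : MMap a b), IsChannel N →
      0 ≤ RgOf (muDist D Ω) Ω N ∧ 0 ≤ RbOf (muDist D Ω) N := by
    intro a b N hN
    constructor
    · apply Real.sSup_nonneg
      rintro x ⟨e, ω, hω, rfl⟩
      exact mu_nonneg hD hΩ (isState_map (isChannel_tensor hN e) (hΩ.isState _ _ hω))
    · rcases Nat.eq_zero_or_pos a with ha | ha
      · subst ha
        apply Real.sSup_nonneg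
        rintro x ⟨e, ρ, hρ, rfl⟩
        have h0 := isState_dim_pos hρ
        rw [Nat.zero_mul] at h0
        exact absurd h0 (lt_irrefl 0)
      · apply Real.sSup_nonneg'
        obtain ⟨ω₀, hω₀⟩ := hΩ.nonempty a ha
        have hω₀' : castM (mul_one a).symm ω₀ ∈ Ω (a * 1) := (castM_free Ω _ _).mpr hω₀
        have hst : IsState (castM (mul_one a).symm ω₀) :=
          (castM_isState _ _).mpr (hΩ.isState _ _ hω₀)
        refine ⟨_, ⟨1, castM (mul_one a).symm ω₀, hst, rfl⟩, ?_⟩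
        rw [mu_free_zero hD hΩ hω₀', sub_zero]
        exact mu_nonneg hD hΩ (isState_map (isChannel_tensor hN 1) hst)
  refine ⟨part1, ?_, ?_⟩
  · intro a b M hM hRNG
    constructor
    · refine le_antisymm (Real.sSup_le ?_ le_rfl) (part1 a b M hM).1
      rintro x ⟨e, ω, hω, rfl⟩
      exact le_of_eq (mu_free_zero hD hΩ (hRNG e ω hω))
    · refine le_antisymm (Real.sSup_le ?_ le_rfl) (part1 a b M hM).2
      rintro x ⟨e, ρ, hρ, rfl⟩
      have h := mu_mono hD hΩ (isChannel_tensor hM e) (fun ω hω => hRNG e ω hω) hρ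
      linarith
  · intro a b e c c' N φ₂ φ₁ hN h2 h1
    have hch2 : ∀ e' : ℕ, IsChannel (tensorMap φ₂ (idMap e')) :=
      fun e' => isChannel_tensor (hΦ.channel _ _ _ h2) e'
    have htid2 : ∀ e' : ℕ, tensorMap φ₂ (idMap e') ∈ Φ ((b * e) * e') (c' * e') :=
      fun e' => hΦ.tensor_id _ _ φ₂ h2 e'
    have htid1 : ∀ e' : ℕ, tensorMap φ₁ (idMap e') ∈ Φ (c * e') ((a * e) * e') :=
      fun e' => hΦ.tensor_id _ _ φ₁ h1 e'
    have hbddg : BddAbove {x : ℝ | ∃ (e'' : ℕ) (ω : Mat (a * e'')), ω ∈ Ω (a * e'') ∧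
        x = muDist D Ω (b * e'') (tensorMap N (idMap e'') ω)} := by
      refine ⟨D 2 rho0 rho1, ?_⟩
      rintro x ⟨e'', ω, hω, rfl⟩
      exact mu_bound hD hΩ (isState_map (isChannel_tensor hN e'') (hΩ.isState _ _ hω))
    have hbddb : BddAbove {x : ℝ | ∃ (e'' : ℕ) (ρ : Mat (a * e'')), IsState ρ ∧
        x = muDist D Ω (b * e'') (tensorMap N (idMap e'') ρ) - muDist D Ω (a * e'') ρ} := by
      refine ⟨D 2 rho0 rho1, ?_⟩
      rintro x ⟨e'', ρ, hρ, rfl⟩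
      have hb := mu_bound hD hΩ (isState_map (isChannel_tensor hN e'') hρ)
      have hn := mu_nonneg hD hΩ hρ
      linarith
    constructor
    · refine Real.sSup_le ?_ (part1 a b N hN).1
      rintro x ⟨e', ω, hω, rfl⟩
      rw [tensorMap_id_comp, tensorMap_id_comp]
      set ω₁ := tensorMap φ₁ (idMap e') ω with hω₁def
      have hω₁ : ω₁ ∈ Ω ((a * e) * e') := hΦ.maps_free _ _ _ (htid1 e') ω hω
      have hstω₁ : IsState ω₁ := hΩ.isState _ _ hω₁
      have s1 : muDist D Ω (c' * e')
            (tensorMap φ₂ (idMap e') (tensorMap (tensorMap N (idMap e)) (idMap e') ω₁))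
          ≤ muDist D Ω ((b * e) * e') (tensorMap (tensorMap N (idMap e)) (idMap e') ω₁) :=
        mu_mono hD hΩ (hch2 e') (hΦ.maps_free _ _ _ (htid2 e'))
          (isState_map (isChannel_tensor (isChannel_tensor hN e) e') hstω₁)
      have s2 : muDist D Ω ((b * e) * e') (tensorMap (tensorMap N (idMap e)) (idMap e') ω₁)
          = muDist D Ω (b * (e * e'))
              (tensorMap N (idMap (e * e')) (castM (mul_assoc a e e') ω₁)) := by
        rw [tensorMap_id_assoc, reindex_symm_eq_castM, muDist_castM]
        rfl
      have hmem : muDist D Ω (b * (e * e'))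
            (tensorMap N (idMap (e * e')) (castM (mul_assoc a e e') ω₁))
          ∈ {x : ℝ | ∃ (e'' : ℕ) (ω : Mat (a * e'')), ω ∈ Ω (a * e'') ∧
            x = muDist D Ω (b * e'') (tensorMap N (idMap e'') ω)} :=
        ⟨e * e', castM (mul_assoc a e e') ω₁, (castM_free Ω _ _).mpr hω₁, rfl⟩
      exact (s2 ▸ s1).trans (le_csSup hbddg hmem)
    · refine Real.sSup_le ?_ (part1 a b N hN).2
      rintro x ⟨e', ρ, hρ, rfl⟩
      rw [tensorMap_id_comp, tensorMap_id_comp]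
      set ρ₁ := tensorMap φ₁ (idMap e') ρ with hρ₁def
      have hstρ₁ : IsState ρ₁ :=
        isState_map (isChannel_tensor (hΦ.channel _ _ _ h1) e') hρ
      have s0 : muDist D Ω ((a * e) * e') ρ₁ ≤ muDist D Ω (c * e') ρ :=
        mu_mono hD hΩ (isChannel_tensor (hΦ.channel _ _ _ h1) e')
          (hΦ.maps_free _ _ _ (htid1 e')) hρ
      have s1 : muDist D Ω (c' * e')
            (tensorMap φ₂ (idMap e') (tensorMap (tensorMap N (idMap e)) (idMap e') ρ₁))
          ≤ muDist D Ω ((b * e) * e') (tensorMap (tensorMap N (idMap e)) (idMap e') ρ₁) :=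
        mu_mono hD hΩ (hch2 e') (hΦ.maps_free _ _ _ (htid2 e'))
          (isState_map (isChannel_tensor (isChannel_tensor hN e) e') hstρ₁)
      have s2 : muDist D Ω ((b * e) * e') (tensorMap (tensorMap N (idMap e)) (idMap e') ρ₁)
          = muDist D Ω (b * (e * e'))
              (tensorMap N (idMap (e * e')) (castM (mul_assoc a e e') ρ₁)) := by
        rw [tensorMap_id_assoc, reindex_symm_eq_castM, muDist_castM]
        rfl
      have s3 : muDist D Ω (a * (e * e')) (castM (mul_assoc a e e') ρ₁)
          = muDist D Ω ((a * e) * e') ρ₁ := muDist_castM D Ω _ _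
      have hmem : muDist D Ω (b * (e * e'))
            (tensorMap N (idMap (e * e')) (castM (mul_assoc a e e') ρ₁))
          - muDist D Ω (a * (e * e')) (castM (mul_assoc a e e') ρ₁)
          ∈ {x : ℝ | ∃ (e'' : ℕ) (ρ' : Mat (a * e'')), IsState ρ' ∧
            x = muDist D Ω (b * e'') (tensorMap N (idMap e'') ρ')
              - muDist D Ω (a * e'') ρ'} :=
        ⟨e * e', castM (mul_assoc a e e') ρ₁, (castM_isState _ _).mpr hstρ₁, rfl⟩
      have hle := le_csSup hbddb hmem
      have key : muDist D Ω (c' * e')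
            (tensorMap φ₂ (idMap e') (tensorMap (tensorMap N (idMap e)) (idMap e') ρ₁))
          - muDist D Ω (c * e') ρ
          ≤ muDist D Ω (b * (e * e'))
              (tensorMap N (idMap (e * e')) (castM (mul_assoc a e e') ρ₁))
          - muDist D Ω (a * (e * e')) (castM (mul_assoc a e e') ρ₁) := by
        rw [s3]
        have h4 := s2 ▸ s1
        linarith
      exact key.trans hle

end
end

section
/- Let λ be a resource destroying channel on system A, i.e., a quantum channel such that (λ⊗id_E)(ρ) is a free state for every state ρ of AE and every ancilla E. Then for every quantum channel N on system A, R_Ω(N) ≤ max over free states ω_AE of D( (N⊗id_E)(ω_AE), (λ∘N ⊗ id_E)(ω_AE) ). -/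
set_option linter.unusedVariables false

noncomputable section

open scoped BigOperators ComplexOrder

lemma mmap_apply_expand {a b : ℕ} (f : MMap a b) (A : Mat a) (i j : Fin b) :
    f A i j = ∑ r : Fin a × Fin a, A r.1 r.2 * f (Matrix.single r.1 r.2 1) i j := by
  conv_lhs => rw [Matrix.matrix_eq_sum_single A]
  rw [map_sum, Matrix.sum_apply, Fintype.sum_prod_type]
  refine Finset.sum_congr rfl fun p _ => ?_
  rw [map_sum, Matrix.sum_apply]
  refine Finset.sum_congr rfl fun q _ => ?_
  have h : Matrix.single p q (A p q) = A p q • Matrix.single p q 1 := by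
    rw [Matrix.smul_single, smul_eq_mul, mul_one]
  rw [h, map_smul, Matrix.smul_apply, smul_eq_mul]

lemma tensorAux_comp {a e : ℕ} (f g : MMap a a) :
    tensorAux (f ∘ₗ g) (idMap e) =
      (tensorAux f (idMap e)) ∘ₗ (tensorAux g (idMap e)) := by
  apply LinearMap.ext; intro X
  ext q q'
  have hms : ∀ (i j : Fin a) (Y : Matrix (Fin a × Fin e) (Fin a × Fin e) ℂ) k l,
      matSlice i j Y k l = Y (i, k) (j, l) := fun _ _ _ _ _ => rfl
  simp only [tensorAux, LinearMap.coe_mk, AddHom.coe_mk, LinearMap.comp_apply,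
    Matrix.of_apply, idMap, LinearMap.id_coe, id_eq, hms]
  simp only [Finset.mul_sum]
  conv_rhs => rw [Finset.sum_comm]
  refine Finset.sum_congr rfl fun p _ => ?_
  rw [mmap_apply_expand f (g (Matrix.single p.1 p.2 1)), Finset.sum_mul]
  refine Finset.sum_congr rfl fun r _ => ?_
  ring

lemma tensorMap_comp_id {a e : ℕ} (f g : MMap a a) :
    tensorMap (f ∘ₗ g) (idMap e) = tensorMap f (idMap e) ∘ₗ tensorMap g (idMap e) := by
  apply LinearMap.ext; intro X
  simp only [tensorMap, LinearMap.comp_apply, LinearEquiv.coe_coe,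
    Matrix.reindexLinearEquiv_apply, tensorAux_comp, Matrix.reindex_apply,
    Equiv.symm_symm, Matrix.submatrix_submatrix, Equiv.symm_comp_self,
    Matrix.submatrix_id_id]

lemma trace_reindex_eq {m n : Type*} [Fintype m] [Fintype n] (e : m ≃ n)
    (A : Matrix m m ℂ) : (Matrix.reindex e e A).trace = A.trace := by
  unfold Matrix.trace
  simp only [Matrix.diag, Matrix.reindex_apply, Matrix.submatrix_apply]
  exact Equiv.sum_comp e.symm fun j => A j j

lemma trace_tensorAux_id {a e : ℕ} (N : MMap a a) (hN : IsTP N)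
    (Y : Matrix (Fin a × Fin e) (Fin a × Fin e) ℂ) :
    (tensorAux N (idMap e) Y).trace = Y.trace := by
  have key : ∀ p : Fin a × Fin a,
      (∑ q1 : Fin a, N (Matrix.single p.1 p.2 1) q1 q1)
        = if p.1 = p.2 then 1 else 0 := by
    intro p
    have h := hN (Matrix.single p.1 p.2 1)
    rw [Matrix.trace] at h
    simp only [Matrix.diag] at h
    rw [h]
    by_cases hpq : p.1 = p.2
    · rw [hpq, Matrix.trace_single_eq_same, if_pos rfl]
    · rw [Matrix.trace_single_eq_of_ne _ _ _ hpq, if_neg hpq]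
  unfold Matrix.trace
  simp only [Matrix.diag, tensorAux, LinearMap.coe_mk, AddHom.coe_mk,
    Matrix.of_apply, idMap, LinearMap.id_coe, id_eq, matSlice]
  rw [Finset.sum_comm]
  calc ∑ p : Fin a × Fin a, ∑ i : Fin a × Fin e,
        N (Matrix.single p.1 p.2 1) i.1 i.1 * Y (p.1, i.2) (p.2, i.2)
      = ∑ p : Fin a × Fin a, (if p.1 = p.2 then (1:ℂ) else 0) *
          ∑ q2 : Fin e, Y (p.1, q2) (p.2, q2) := by
        refine Finset.sum_congr rfl fun p _ => ?_
        rw [← key p, Fintype.sum_prod_type, Finset.sum_mul]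
        exact Finset.sum_congr rfl fun q1 _ => by simp [Finset.mul_sum]
    _ = ∑ i : Fin a × Fin e, Y i i := by
        rw [Fintype.sum_prod_type, Fintype.sum_prod_type]
        simp

lemma isTP_tensor_id {a e : ℕ} (N : MMap a a) (hN : IsTP N) :
    IsTP (tensorMap N (idMap e)) := by
  intro X
  simp only [tensorMap, LinearMap.comp_apply, LinearEquiv.coe_coe,
    Matrix.reindexLinearEquiv_apply]
  rw [trace_reindex_eq, trace_tensorAux_id N hN, trace_reindex_eq]

lemma isState_tensor_id {a e : ℕ} (N : MMap a a) (hN : IsChannel N) {r : Mat (a * e)}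
    (hr : IsState r) : IsState (tensorMap N (idMap e) r) :=
  ⟨hN.1.2 e r hr.1, by rw [isTP_tensor_id N hN.2 r, hr.2]⟩

/-- If `λ` is a resource destroying channel on system `A`, then for every
quantum channel `N` on `A`,
`R_Ω(N) ≤ max_{ω free} D((N ⊗ id)(ω), ((λ ∘ N) ⊗ id)(ω))`. -/
theorem ROmega_le_resourceDestroying
    (D : DQ) (hD : IsDistanceQuantifier D) (Ω : FreeStates) (hΩ : IsFreeStates Ω)
    (a : ℕ) (lam : MMap a a) (hlam : IsChannel lam)
    (hRD : ∀ (e : ℕ) (ρ : Mat (a * e)), IsState ρ → tensorMap lam (idMap e) ρ ∈ Ω (a * e)) :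
    ∀ N : MMap a a, IsChannel N →
      ROmega D Ω N ≤ sSup {x : ℝ | ∃ (e : ℕ) (ω : Mat (a * e)), ω ∈ Ω (a * e) ∧
        x = D (a * e) (tensorMap N (idMap e) ω) (tensorMap (lam ∘ₗ N) (idMap e) ω)} := by
  intro N hN
  have hM : IsChannel (lam ∘ₗ N) := by
    refine ⟨⟨fun X hX => hlam.1.1 _ (hN.1.1 X hX), fun e => ?_⟩, fun X => by
      simp only [LinearMap.comp_apply]; rw [hlam.2, hN.2]⟩
    intro X hX
    rw [tensorMap_comp_id]
    exact hlam.1.2 e _ (hN.1.2 e X hX)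
  have hRNG : RNG Ω (lam ∘ₗ N) := by
    intro e ω hω
    rw [tensorMap_comp_id]
    exact hRD e _ (isState_tensor_id N hN (hΩ.isState _ ω hω))
  have hbdd : BddBelow {x : ℝ | ∃ M : MMap a a, IsChannel M ∧ RNG Ω M ∧
      x = chanDistFree D Ω N M} := by
    refine ⟨0, fun x hx => ?_⟩
    obtain ⟨M, hMc, hMr, rfl⟩ := hx
    apply Real.sSup_nonneg
    rintro y ⟨e, ω, hω, rfl⟩
    exact hD.nonneg _ _ _ (isState_tensor_id N hN (hΩ.isState _ ω hω))
      (isState_tensor_id M hMc (hΩ.isState _ ω hω))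
  exact csInf_le hbdd ⟨lam ∘ₗ N, hM, hRNG, rfl⟩


end
end
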